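/- arXiv:2306.08217 — 4 statements merged into one kernel-verified Lean document; each statement's English description precedes it below -/
import Mathlib

section
/- Every graph G with minimum degree at least 2k−1 admits a vertex partition V(G) = V₁ ∪ V₂ such that every vertex of V₁ has at least k neighbors in V₂ and every vertex of V₂ has at least k neighbors in V₁. -/
open Finset

theorem stmt5 (V : Type) [Fintype V] [DecidableEq V]
    (G : SimpleGraph V) [DecidableRel G.Adj] (k : ℕ) (hk : 0 < k)
    (hδ : 2 * k - 1 ≤ G.minDegree) :
    ∃ V₁ V₂ : Finset V, V₁ ∪ V₂ = Finset.univ ∧ Disjoint V₁ V₂ ∧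
      (∀ v ∈ V₁, k ≤ (G.neighborFinset v ∩ V₂).card) ∧
      (∀ v ∈ V₂, k ≤ (G.neighborFinset v ∩ V₁).card) := by
  classical
  set f : Finset V → ℕ := fun S => ∑ v ∈ S, (G.neighborFinset v ∩ Sᶜ).card with hf
  have hcard : ∀ (v : V) (B : Finset V),
      (G.neighborFinset v ∩ B).card = ∑ u ∈ B, if G.Adj v u then 1 else 0 := by
    intro v B
    rw [← Finset.card_filter]
    congr 1
    ext u
    simp [SimpleGraph.mem_neighborFinset, and_comm]
  have hsym : ∀ S : Finset V, f S = f Sᶜ := by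
    intro S
    simp only [hf]
    rw [Finset.sum_congr rfl fun v _ => hcard v Sᶜ, Finset.sum_comm]
    simp only [compl_compl]
    rw [Finset.sum_congr rfl fun v _ => hcard v S]
    refine Finset.sum_congr rfl fun u _ => Finset.sum_congr rfl fun v _ => ?_
    simp [G.adj_comm]
  have key : ∀ (S : Finset V), ∀ v ∈ S,
      (G.neighborFinset v ∩ Sᶜ).card < k → f S < f (S.erase v) := by
    intro S v hv hlt
    have hdeg : 2 * k - 1 ≤ G.degree v := le_trans hδ (G.minDegree_le_degree v)
    have hsplit : (G.neighborFinset v ∩ S).card + (G.neighborFinset v ∩ Sᶜ).card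
        = G.degree v := by
      rw [← SimpleGraph.card_neighborFinset_eq_degree]
      rw [← Finset.card_union_of_disjoint]
      · congr 1
        ext u
        simp only [Finset.mem_union, Finset.mem_inter, Finset.mem_compl]
        tauto
      · exact Finset.disjoint_left.2 (by
          intro a ha hb
          simp only [Finset.mem_inter, Finset.mem_compl] at ha hb
          exact hb.2 ha.2)
    have hb : k ≤ (G.neighborFinset v ∩ S).card := by omega
    have hcompl : (S.erase v)ᶜ = insert v Sᶜ := by
      ext u
      simp only [Finset.mem_compl, Finset.mem_erase, Finset.mem_insert]
      tauto
    have hterm : ∀ u ∈ S.erase v, (G.neighborFinset u ∩ (S.erase v)ᶜ).card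
        = (G.neighborFinset u ∩ Sᶜ).card + (if G.Adj u v then 1 else 0) := by
      intro u hu
      rw [hcompl, Finset.inter_comm]
      by_cases hadj : G.Adj u v
      · rw [Finset.insert_inter_of_mem (by simpa [SimpleGraph.mem_neighborFinset,
          G.adj_comm] using hadj), Finset.card_insert_of_notMem (by
            simp [Finset.mem_inter, Finset.mem_compl, hv]), Finset.inter_comm]
        simp [hadj]
      · rw [Finset.insert_inter_of_notMem (by simpa [SimpleGraph.mem_neighborFinset,
          G.adj_comm] using hadj), Finset.inter_comm]
        simp [hadj]
    have hfe : f (S.erase v) = (∑ u ∈ S.erase v, (G.neighborFinset u ∩ Sᶜ).card)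
        + (G.neighborFinset v ∩ S).card := by
      simp only [hf]
      rw [Finset.sum_congr rfl hterm, Finset.sum_add_distrib]
      congr 1
      rw [← Finset.card_filter]
      have : (G.neighborFinset v ∩ S) = (S.erase v).filter (fun u => G.Adj u v) := by
        ext u
        simp only [Finset.mem_inter, SimpleGraph.mem_neighborFinset, Finset.mem_filter,
          Finset.mem_erase, G.adj_comm]
        constructor
        · rintro ⟨h1, h2⟩
          exact ⟨⟨fun h => G.loopless.irrefl v (h ▸ h1), h2⟩, h1⟩
        · rintro ⟨⟨_, h2⟩, h1⟩
          exact ⟨h1, h2⟩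
      rw [this]
    have hfs : f S = (∑ u ∈ S.erase v, (G.neighborFinset u ∩ Sᶜ).card)
        + (G.neighborFinset v ∩ Sᶜ).card := by
      simp only [hf]
      rw [Finset.sum_erase_add _ _ hv]
    omega
  obtain ⟨S, -, hmax⟩ := Finset.exists_max_image (Finset.univ : Finset (Finset V)) f
    ⟨∅, Finset.mem_univ ∅⟩
  refine ⟨S, Sᶜ, Finset.union_compl S, disjoint_compl_right, ?_, ?_⟩
  · intro v hv
    by_contra hlt
    push_neg at hlt
    exact absurd (hmax _ (Finset.mem_univ _)) (not_le.2 (key S v hv hlt))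
  · intro v hv
    by_contra hlt
    push_neg at hlt
    have := key Sᶜ v hv (by rwa [compl_compl])
    rw [← hsym] at this
    exact absurd (hmax _ (Finset.mem_univ _)) (not_le.2 this)
end

section
/- (Ore's theorem on bipartite f-factors) Let G be a bipartite graph with parts V₁ and V₂ and let f : V(G) → ℕ. There exists a subgraph H of G with d_H(x) = f(x) for all x ∈ V₁ and d_H(y) ≤ f(y) for all y ∈ V₂ if and only if for every subset X ⊆ V₁, Σ_{x∈X} f(x) ≤ Σ_{y∈V₂} min{f(y), e_G(y, X)}, where e_G(y, X) is the number of neighbors of y in X. -/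
set_option maxHeartbeats 1000000

open Finset SimpleGraph

variable {V : Type} [Fintype V] [DecidableEq V]

/-- number of neighbors of `y` inside `X`. -/
noncomputable def eC (G : SimpleGraph V) (y : V) (X : Finset V) : ℕ :=
  (G.neighborSet y ∩ ↑X).ncard

lemma eC_eq_filter (G : SimpleGraph V) [DecidableRel G.Adj] (y : V) (X : Finset V) :
    eC G y X = (X.filter (fun x => G.Adj y x)).card := by
  rw [eC, ← Set.ncard_coe_finset]
  congr 1
  ext a
  simp [SimpleGraph.mem_neighborSet, and_comm]

lemma eC_eq (G : SimpleGraph V) [DecidableRel G.Adj] (y : V) (X : Finset V) :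
    (G.neighborFinset y ∩ X).card = eC G y X := by
  rw [eC_eq_filter]
  congr 1
  ext a
  simp [and_comm]

lemma eC_union_inter (G : SimpleGraph V) (y : V) (X Y : Finset V) :
    eC G y (X ∪ Y) + eC G y (X ∩ Y) = eC G y X + eC G y Y := by
  classical
  simp only [eC_eq_filter, Finset.filter_union, Finset.filter_inter_distrib]
  exact Finset.card_union_add_card_inter _ _

lemma eC_mono (G : SimpleGraph V) (y : V) {X Y : Finset V} (h : X ⊆ Y) :
    eC G y X ≤ eC G y Y :=
  Set.ncard_le_ncard (Set.inter_subset_inter_right _ (by exact_mod_cast h)) (Set.toFinite _)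

lemma eC_empty (G : SimpleGraph V) (y : V) : eC G y ∅ = 0 := by simp [eC]

lemma eC_insert (G : SimpleGraph V) [DecidableRel G.Adj] (y x : V) (X : Finset V)
    (hx : x ∉ X) :
    eC G y (insert x X) = eC G y X + (if G.Adj y x then 1 else 0) := by
  simp only [eC_eq_filter, Finset.filter_insert]
  split_ifs with h
  · rw [Finset.card_insert_of_notMem (fun hm => hx (Finset.mem_of_mem_filter _ hm))]
  · simp

theorem ore_core (V₁ V₂ : Finset V) (hDisj : Disjoint V₁ V₂) :
    ∀ n : ℕ, ∀ G : SimpleGraph V,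
    (∀ u v, G.Adj u v → (u ∈ V₁ ∧ v ∈ V₂) ∨ (u ∈ V₂ ∧ v ∈ V₁)) →
    ∀ f : V → ℕ, (∑ x ∈ V₁, f x = n) →
    (∀ X ⊆ V₁, ∑ x ∈ X, f x ≤ ∑ y ∈ V₂, min (f y) (eC G y X)) →
    ∃ H : SimpleGraph V, H ≤ G ∧
      (∀ x ∈ V₁, (H.neighborSet x).ncard = f x) ∧
      (∀ y ∈ V₂, (H.neighborSet y).ncard ≤ f y) := by
  intro n
  induction n with
  | zero =>
    intro G hbip f hsum _
    refine ⟨⊥, bot_le, fun x hx => ?_, fun y _ => ?_⟩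
    · have : f x = 0 := by
        by_contra h
        have : 0 < ∑ x ∈ V₁, f x := Finset.sum_pos' (fun _ _ => Nat.zero_le _) ⟨x, hx, by omega⟩
        omega
      simp [SimpleGraph.neighborSet, this]
    · simp [SimpleGraph.neighborSet]
  | succ n ih =>
    intro G hbip f hsum hC
    classical
    -- find x₀ ∈ V₁ with f x₀ > 0
    have hx : ∃ x ∈ V₁, 0 < f x := by
      by_contra h
      push_neg at h
      have : ∑ x ∈ V₁, f x = 0 := Finset.sum_eq_zero (fun x hx => by have := h x hx; omega)
      omega
    obtain ⟨x₀, hx₀V, hx₀f⟩ := hx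
    set g : Finset V → ℕ := fun X => ∑ y ∈ V₂, min (f y) (eC G y X) with hg
    -- T : union of all tight subsets of V₁.erase x₀
    set T : Finset V :=
      ((V₁.erase x₀).powerset.filter (fun X => ∑ x ∈ X, f x = g X)).sup id with hT
    have hTprop : T ⊆ V₁.erase x₀ ∧ ∑ x ∈ T, f x = g T := by
      rw [hT]
      apply Finset.sup_induction (p := fun S => S ⊆ V₁.erase x₀ ∧ ∑ x ∈ S, f x = g S)
      · exact ⟨Finset.empty_subset _, by simp [hg, eC_empty]⟩
      · rintro a ⟨ha1, ha2⟩ b ⟨hb1, hb2⟩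
        have hsubmod : g (a ∪ b) + g (a ∩ b) ≤ g a + g b := by
          show (∑ y ∈ V₂, min (f y) (eC G y (a ∪ b))) + ∑ y ∈ V₂, min (f y) (eC G y (a ∩ b))
              ≤ (∑ y ∈ V₂, min (f y) (eC G y a)) + ∑ y ∈ V₂, min (f y) (eC G y b)
          rw [← Finset.sum_add_distrib, ← Finset.sum_add_distrib]
          apply Finset.sum_le_sum
          intro y _
          have h1 := eC_union_inter G y a b
          have h2 := eC_mono G y (Finset.inter_subset_left : a ∩ b ⊆ a)
          have h3 := eC_mono G y (Finset.inter_subset_right : a ∩ b ⊆ b)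
          omega
        have hmod : (∑ x ∈ a ∪ b, f x) + ∑ x ∈ a ∩ b, f x
            = (∑ x ∈ a, f x) + ∑ x ∈ b, f x := Finset.sum_union_inter
        have hu : a ∪ b ⊆ V₁ :=
          (Finset.union_subset ha1 hb1).trans (Finset.erase_subset _ _)
        have hi : a ∩ b ⊆ V₁ :=
          ((Finset.inter_subset_left).trans ha1).trans (Finset.erase_subset _ _)
        have hCu : ∑ x ∈ a ∪ b, f x ≤ g (a ∪ b) := hC _ hu
        have hCi : ∑ x ∈ a ∩ b, f x ≤ g (a ∩ b) := hC _ hi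
        have hsup : a ⊔ b = a ∪ b := rfl
        rw [hsup]
        exact ⟨Finset.union_subset ha1 hb1, by omega⟩
      · intro X hX
        rw [Finset.mem_filter, Finset.mem_powerset] at hX
        exact hX
    have hx₀T : x₀ ∉ T := fun h => (Finset.mem_erase.mp (hTprop.1 h)).1 rfl
    have hTV₁ : T ⊆ V₁ := hTprop.1.trans (Finset.erase_subset _ _)
    -- counting: f x₀ many neighbors y with eC G y T < f y
    have hCins : f x₀ + ∑ x ∈ T, f x ≤ ∑ y ∈ V₂, min (f y) (eC G y (insert x₀ T)) := by
      have := hC (insert x₀ T) (Finset.insert_subset hx₀V hTV₁)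
      rwa [Finset.sum_insert hx₀T] at this
    have hsplit : ∑ y ∈ V₂, min (f y) (eC G y (insert x₀ T))
        = (∑ y ∈ V₂, min (f y) (eC G y T))
          + (V₂.filter (fun y => G.Adj y x₀ ∧ eC G y T < f y)).card := by
      rw [Finset.card_filter, ← Finset.sum_add_distrib]
      apply Finset.sum_congr rfl
      intro y _
      rw [eC_insert G y x₀ T hx₀T]
      by_cases hp : G.Adj y x₀
      · simp only [hp, if_true, true_and]
        split_ifs <;> omega
      · simp only [hp, if_false, false_and]
        omega
    rw [hsplit] at hCins
    have hgT : g T = ∑ y ∈ V₂, min (f y) (eC G y T) := rfl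
    have hfc : 0 < (V₂.filter (fun y => G.Adj y x₀ ∧ eC G y T < f y)).card := by
      have := hTprop.2
      omega
    obtain ⟨y₀, hy₀⟩ := Finset.card_pos.mp hfc
    rw [Finset.mem_filter] at hy₀
    obtain ⟨hy₀V, hadj, hlt⟩ := hy₀
    have hxy : x₀ ≠ y₀ := fun h => Finset.disjoint_left.mp hDisj hx₀V (h ▸ hy₀V)
    -- new data
    set f' : V → ℕ := fun v => if v = x₀ then f x₀ - 1 else if v = y₀ then f y₀ - 1 else f v
      with hf'
    set G' : SimpleGraph V := G.deleteEdges {s(x₀, y₀)} with hG'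
    have hG'adj : ∀ a b, G'.Adj a b ↔ G.Adj a b ∧ ¬(a = x₀ ∧ b = y₀) ∧ ¬(a = y₀ ∧ b = x₀) := by
      intro a b
      rw [hG', SimpleGraph.deleteEdges_adj, Set.mem_singleton_iff, Sym2.eq_iff]
      tauto
    have hG'le : G' ≤ G := SimpleGraph.deleteEdges_le _
    have hbip' : ∀ u v, G'.Adj u v → (u ∈ V₁ ∧ v ∈ V₂) ∨ (u ∈ V₂ ∧ v ∈ V₁) :=
      fun u v h => hbip u v (hG'le h)
    -- eC of G'
    have heC'ne : ∀ y, y ≠ x₀ → y ≠ y₀ → ∀ X : Finset V, eC G' y X = eC G y X := by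
      intro y h1 h2 X
      rw [eC_eq_filter, eC_eq_filter]
      congr 1
      apply Finset.filter_congr
      intro x _
      rw [hG'adj]
      constructor
      · tauto
      · intro h; exact ⟨h, fun hc => h1 hc.1, fun hc => h2 hc.1⟩
    have heC'y₀ : ∀ X : Finset V, x₀ ∉ X → eC G' y₀ X = eC G y₀ X := by
      intro X hX
      rw [eC_eq_filter, eC_eq_filter]
      congr 1
      apply Finset.filter_congr
      intro x hx
      rw [hG'adj]
      constructor
      · tauto
      · intro h
        refine ⟨h, fun hc => hxy hc.1.symm, fun hc => hX (hc.2 ▸ hx)⟩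
    have heC'y₀' : ∀ X : Finset V, x₀ ∈ X →
        eC G' y₀ X + 1 = eC G y₀ X := by
      intro X hX
      rw [eC_eq_filter, eC_eq_filter]
      have : X.filter (fun x => G.Adj y₀ x) = insert x₀ (X.filter (fun x => G'.Adj y₀ x)) := by
        ext a
        simp only [Finset.mem_filter, Finset.mem_insert, hG'adj]
        constructor
        · intro ⟨haX, haAdj⟩
          by_cases hax : a = x₀
          · exact Or.inl hax
          · refine Or.inr ⟨haX, haAdj, fun hc => hxy hc.1.symm, fun hc => hax hc.2⟩
        · rintro (rfl | ⟨haX, haAdj, _, _⟩)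
          · exact ⟨hX, hadj⟩
          · exact ⟨haX, haAdj⟩
      rw [this, Finset.card_insert_of_notMem]
      simp only [Finset.mem_filter, hG'adj]
      tauto
    -- sum over V₁ of f'
    have hy₀nV₁ : y₀ ∉ V₁ := fun h => Finset.disjoint_left.mp hDisj h hy₀V
    have hsum' : ∑ x ∈ V₁, f' x = n := by
      have h1 : f x₀ + ∑ x ∈ V₁.erase x₀, f x = ∑ x ∈ V₁, f x :=
        Finset.add_sum_erase _ _ hx₀V
      have h2 : f' x₀ + ∑ x ∈ V₁.erase x₀, f' x = ∑ x ∈ V₁, f' x :=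
        Finset.add_sum_erase _ _ hx₀V
      have h3 : ∑ x ∈ V₁.erase x₀, f' x = ∑ x ∈ V₁.erase x₀, f x := by
        apply Finset.sum_congr rfl
        intro x hx
        have hx1 : x ≠ x₀ := (Finset.mem_erase.mp hx).1
        have hx2 : x ≠ y₀ := fun h => hy₀nV₁ (h ▸ (Finset.mem_erase.mp hx).2)
        simp [hf', hx1, hx2]
      have h4 : f' x₀ = f x₀ - 1 := by simp [hf']
      omega
    -- condition for G', f'
    have hfy₀ : 0 < f y₀ := by omega
    have hC' : ∀ X ⊆ V₁, ∑ x ∈ X, f' x ≤ ∑ y ∈ V₂, min (f' y) (eC G' y X) := by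
      intro X hXV
      have hy₀nX : y₀ ∉ X := fun h => hy₀nV₁ (hXV h)
      -- f' agrees with f on X except x₀
      have hA : ∀ y ∈ V₂.erase y₀, min (f' y) (eC G' y X) = min (f y) (eC G y X) := by
        intro y hy
        have hy1 : y ≠ y₀ := (Finset.mem_erase.mp hy).1
        have hy2 : y ≠ x₀ := fun h =>
          Finset.disjoint_left.mp hDisj hx₀V (h ▸ (Finset.mem_erase.mp hy).2)
        rw [heC'ne y hy2 hy1]
        simp [hf', hy1, hy2]
      have hAsum : ∑ y ∈ V₂.erase y₀, min (f' y) (eC G' y X)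
          = ∑ y ∈ V₂.erase y₀, min (f y) (eC G y X) := Finset.sum_congr rfl hA
      have hgoal1 : min (f' y₀) (eC G' y₀ X) + ∑ y ∈ V₂.erase y₀, min (f' y) (eC G' y X)
          = ∑ y ∈ V₂, min (f' y) (eC G' y X) :=
        Finset.add_sum_erase V₂ (fun y => min (f' y) (eC G' y X)) hy₀V
      have hhyp1 : min (f y₀) (eC G y₀ X) + ∑ y ∈ V₂.erase y₀, min (f y) (eC G y X)
          = ∑ y ∈ V₂, min (f y) (eC G y X) :=
        Finset.add_sum_erase V₂ (fun y => min (f y) (eC G y X)) hy₀V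
      have hCX := hC X hXV
      have hfy₀' : f' y₀ = f y₀ - 1 := by simp [hf', hxy.symm]
      by_cases hx₀X : x₀ ∈ X
      · -- LHS drops by 1, y₀-term drops by at most 1
        have hEX : eC G' y₀ X + 1 = eC G y₀ X := heC'y₀' X hx₀X
        have hLHS : (∑ x ∈ X, f' x) + 1 = ∑ x ∈ X, f x := by
          have h1 : f' x₀ + ∑ x ∈ X.erase x₀, f' x = ∑ x ∈ X, f' x :=
            Finset.add_sum_erase _ _ hx₀X
          have h2 : f x₀ + ∑ x ∈ X.erase x₀, f x = ∑ x ∈ X, f x :=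
            Finset.add_sum_erase _ _ hx₀X
          have h3 : ∑ x ∈ X.erase x₀, f' x = ∑ x ∈ X.erase x₀, f x := by
            apply Finset.sum_congr rfl
            intro x hx
            have hx1 : x ≠ x₀ := (Finset.mem_erase.mp hx).1
            have hx2 : x ≠ y₀ := fun h => hy₀nX (h ▸ (Finset.mem_erase.mp hx).2)
            simp [hf', hx1, hx2]
          have h4 : f' x₀ = f x₀ - 1 := by simp [hf']
          omega
        have hpos : 0 < eC G y₀ X := by
          rw [eC]
          refine (Set.ncard_pos (Set.toFinite _)).mpr ⟨x₀, hadj, ?_⟩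
          exact_mod_cast hx₀X
        have hterm : min (f y₀) (eC G y₀ X) ≤ min (f' y₀) (eC G' y₀ X) + 1 := by
          rw [hfy₀']
          omega
        have hmin1 : 1 ≤ min (f y₀) (eC G y₀ X) := le_min hfy₀ hpos
        omega
      · -- x₀ ∉ X
        have hEX : eC G' y₀ X = eC G y₀ X := heC'y₀ X hx₀X
        have hLHS : ∑ x ∈ X, f' x = ∑ x ∈ X, f x := by
          apply Finset.sum_congr rfl
          intro x hx
          have hx1 : x ≠ x₀ := fun h => hx₀X (h ▸ hx)
          have hx2 : x ≠ y₀ := fun h => hy₀nX (h ▸ hx)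
          simp [hf', hx1, hx2]
        by_cases htight : ∑ x ∈ X, f x = g X
        · -- X tight ⇒ X ⊆ T ⇒ eC G y₀ X < f y₀
          have hXT : X ⊆ T := by
            rw [hT]
            have : X ∈ (V₁.erase x₀).powerset.filter (fun Y => ∑ x ∈ Y, f x = g Y) := by
              rw [Finset.mem_filter, Finset.mem_powerset]
              exact ⟨fun a ha => Finset.mem_erase.mpr ⟨fun h => hx₀X (h ▸ ha), hXV ha⟩, htight⟩
            exact Finset.le_sup (f := id) this
          have hXlt : eC G y₀ X < f y₀ := lt_of_le_of_lt (eC_mono G y₀ hXT) hlt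
          have hterm : min (f' y₀) (eC G' y₀ X) = min (f y₀) (eC G y₀ X) := by
            rw [hfy₀', hEX]
            omega
          have hgX : g X = ∑ y ∈ V₂, min (f y) (eC G y X) := rfl
          omega
        · -- X not tight: strict inequality gives slack 1
          have hne2 : ∑ x ∈ X, f x ≠ g X := htight
          have hgX : g X = ∑ y ∈ V₂, min (f y) (eC G y X) := rfl
          have hterm : min (f y₀) (eC G y₀ X) ≤ min (f' y₀) (eC G' y₀ X) + 1 := by
            rw [hfy₀', hEX]
            omega
          omega
    -- apply induction hypothesis
    obtain ⟨H', hH'le, hH'deg, hH'ub⟩ := ih G' hbip' f' hsum' hC'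
    -- add back the edge x₀y₀
    set H : SimpleGraph V := H' ⊔ SimpleGraph.fromEdgeSet {s(x₀, y₀)} with hH
    have hEadj : ∀ a b, (SimpleGraph.fromEdgeSet {s(x₀, y₀)} : SimpleGraph V).Adj a b
        ↔ (a = x₀ ∧ b = y₀) ∨ (a = y₀ ∧ b = x₀) := by
      intro a b
      rw [SimpleGraph.fromEdgeSet_adj, Set.mem_singleton_iff, Sym2.eq_iff]
      constructor
      · rintro ⟨h, _⟩; exact h
      · rintro (⟨rfl, rfl⟩ | ⟨rfl, rfl⟩)
        · exact ⟨Or.inl ⟨rfl, rfl⟩, hxy⟩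
        · exact ⟨Or.inr ⟨rfl, rfl⟩, hxy.symm⟩
    have hHadj : ∀ a b, H.Adj a b ↔ H'.Adj a b ∨ (a = x₀ ∧ b = y₀) ∨ (a = y₀ ∧ b = x₀) := by
      intro a b
      rw [hH, SimpleGraph.sup_adj, hEadj]
    have hHle : H ≤ G := by
      intro a b hab
      rw [hHadj] at hab
      rcases hab with h | ⟨rfl, rfl⟩ | ⟨rfl, rfl⟩
      · exact hG'le (hH'le h)
      · exact hadj.symm
      · exact hadj
    have hnG'xy : ¬ G'.Adj x₀ y₀ := by
      rw [hG'adj]; tauto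
    have hN : ∀ v, v ≠ x₀ → v ≠ y₀ → H.neighborSet v = H'.neighborSet v := by
      intro v h1 h2
      ext a
      simp only [SimpleGraph.mem_neighborSet, hHadj]
      constructor
      · rintro (h | ⟨rfl, rfl⟩ | ⟨rfl, rfl⟩)
        · exact h
        · exact absurd rfl h1
        · exact absurd rfl h2
      · exact Or.inl
    have hNx₀ : H.neighborSet x₀ = insert y₀ (H'.neighborSet x₀) := by
      ext a
      simp only [SimpleGraph.mem_neighborSet, hHadj, Set.mem_insert_iff]
      constructor
      · rintro (h | ⟨-, rfl⟩ | ⟨h, rfl⟩)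
        · exact Or.inr h
        · exact Or.inl rfl
        · exact absurd h hxy
      · rintro (rfl | h)
        · exact Or.inr (Or.inl (by simp))
        · exact Or.inl h
    have hNy₀ : H.neighborSet y₀ = insert x₀ (H'.neighborSet y₀) := by
      ext a
      simp only [SimpleGraph.mem_neighborSet, hHadj, Set.mem_insert_iff]
      constructor
      · rintro (h | ⟨h, rfl⟩ | ⟨-, rfl⟩)
        · exact Or.inr h
        · exact absurd h hxy.symm
        · exact Or.inl rfl
      · rintro (rfl | h)
        · exact Or.inr (Or.inr (by simp))
        · exact Or.inl h
    have hy₀n : y₀ ∉ H'.neighborSet x₀ := fun h => hnG'xy (hH'le h)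
    have hx₀n : x₀ ∉ H'.neighborSet y₀ := fun h => hnG'xy (hH'le h).symm
    refine ⟨H, hHle, ?_, ?_⟩
    · intro x hxV
      have hxny₀ : x ≠ y₀ := fun h => hy₀nV₁ (h ▸ hxV)
      by_cases hxx₀ : x = x₀
      · subst hxx₀
        rw [hNx₀, Set.ncard_insert_of_notMem hy₀n]
        have := hH'deg x hxV
        have h4 : f' x = f x - 1 := by simp [hf']
        omega
      · rw [hN x hxx₀ hxny₀]
        have := hH'deg x hxV
        have : f' x = f x := by rw [hf']; simp [hxx₀, hxny₀]
        omega
    · intro y hyV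
      have hynx₀ : y ≠ x₀ := by
        rintro rfl
        exact Finset.disjoint_left.mp hDisj hx₀V hyV
      by_cases hyy₀ : y = y₀
      · subst hyy₀
        rw [hNy₀, Set.ncard_insert_of_notMem hx₀n]
        have := hH'ub y hyV
        have h4 : f' y = f y - 1 := by simp [hf', hxy.symm]
        omega
      · rw [hN y hynx₀ hyy₀]
        have := hH'ub y hyV
        have : f' y = f y := by rw [hf']; simp [hynx₀, hyy₀]
        omega

theorem stmt7 (V : Type) [Fintype V] [DecidableEq V]
    (G : SimpleGraph V) [DecidableRel G.Adj]
    (V₁ V₂ : Finset V) (hU : V₁ ∪ V₂ = Finset.univ) (hDisj : Disjoint V₁ V₂)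
    (hbip : ∀ u v, G.Adj u v → (u ∈ V₁ ∧ v ∈ V₂) ∨ (u ∈ V₂ ∧ v ∈ V₁))
    (f : V → ℕ) :
    (∃ H : SimpleGraph V, H ≤ G ∧
      (∀ x ∈ V₁, (H.neighborSet x).ncard = f x) ∧
      (∀ y ∈ V₂, (H.neighborSet y).ncard ≤ f y)) ↔
    (∀ X ⊆ V₁, ∑ x ∈ X, f x ≤ ∑ y ∈ V₂, min (f y) ((G.neighborFinset y ∩ X).card)) := by
  classical
  constructor
  · rintro ⟨H, hle, hdeg, hub⟩ X hX
    -- for x ∈ V₁, neighbors of x (in H) lie in V₂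
    have hNsub : ∀ x ∈ V₁, ∀ v, H.Adj x v → v ∈ V₂ := by
      intro x hx v hv
      rcases hbip x v (hle hv) with ⟨_, h⟩ | ⟨h, _⟩
      · exact h
      · exact absurd hx (Finset.disjoint_right.mp hDisj h)
    have hcount : ∀ x ∈ X, (H.neighborSet x).ncard
        = ∑ y ∈ V₂, (if H.Adj x y then 1 else 0) := by
      intro x hx
      rw [← Finset.card_filter]
      have : H.neighborSet x = ↑(V₂.filter (fun y => H.Adj x y)) := by
        ext v
        simp only [SimpleGraph.mem_neighborSet, Finset.coe_filter, Set.mem_setOf_eq]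
        exact ⟨fun h => ⟨hNsub x (hX hx) v h, h⟩, fun h => h.2⟩
      rw [this, Set.ncard_coe_finset]
    calc ∑ x ∈ X, f x = ∑ x ∈ X, ∑ y ∈ V₂, (if H.Adj x y then 1 else 0) := by
          apply Finset.sum_congr rfl
          intro x hx
          rw [← hcount x hx, hdeg x (hX hx)]
      _ = ∑ y ∈ V₂, ∑ x ∈ X, (if H.Adj x y then 1 else 0) := Finset.sum_comm
      _ ≤ ∑ y ∈ V₂, min (f y) ((G.neighborFinset y ∩ X).card) := by
          apply Finset.sum_le_sum
          intro y hy
          rw [← Finset.card_filter]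
          apply le_min
          · -- ≤ f y
            have hsub : ↑(X.filter (fun x => H.Adj x y)) ⊆ H.neighborSet y := by
              intro a ha
              simp only [Finset.coe_filter, Set.mem_setOf_eq] at ha
              exact ha.2.symm
            calc (X.filter (fun x => H.Adj x y)).card
                = (↑(X.filter (fun x => H.Adj x y)) : Set V).ncard :=
                  (Set.ncard_coe_finset _).symm
              _ ≤ (H.neighborSet y).ncard := Set.ncard_le_ncard hsub (Set.toFinite _)
              _ ≤ f y := hub y hy
          · apply Finset.card_le_card
            intro a ha
            rw [Finset.mem_filter] at ha
            rw [Finset.mem_inter, SimpleGraph.mem_neighborFinset]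
            exact ⟨(hle ha.2).symm, ha.1⟩
  · intro h
    apply ore_core V₁ V₂ hDisj (∑ x ∈ V₁, f x) G hbip f rfl
    intro X hX
    have := h X hX
    simpa only [eC_eq] using this
end

section
/- (Kleitman's lemma / Harris inequality) Fix p ∈ (0,1) and consider the product measure on subsets of [n] where each element is included independently with probability p. If 𝒜 and ℬ are monotonically increasing families of subsets of [n], then P(𝒜 ∩ ℬ) ≥ P(𝒜)·P(ℬ). -/
/-- The probability that a `p`-random subset of `Fin n` belongs to the family `𝒜`. -/
noncomputable def famProb (n : ℕ) (p : ℝ) (𝒜 : Finset (Finset (Fin n))) : ℝ :=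
  ∑ A ∈ 𝒜, p ^ A.card * (1 - p) ^ (n - A.card)

theorem stmt14 (n : ℕ) (p : ℝ) (hp : p ∈ Set.Ioo (0 : ℝ) 1)
    (𝒜 ℬ : Finset (Finset (Fin n)))
    (h𝒜 : ∀ A ∈ 𝒜, ∀ A' : Finset (Fin n), A ⊆ A' → A' ∈ 𝒜)
    (hℬ : ∀ B ∈ ℬ, ∀ B' : Finset (Fin n), B ⊆ B' → B' ∈ ℬ) :
    famProb n p 𝒜 * famProb n p ℬ ≤ famProb n p (𝒜 ∩ ℬ) := by
  classical
  obtain ⟨hp0, hp1⟩ := hp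
  have hq : (0:ℝ) ≤ 1 - p := by linarith
  set μ : Finset (Fin n) → ℝ := fun s => p ^ s.card * (1 - p) ^ (n - s.card) with hμdef
  have hμ0 : 0 ≤ μ := fun s => mul_nonneg (pow_nonneg hp0.le _) (pow_nonneg hq _)
  set f : Finset (Fin n) → ℝ := fun s => if s ∈ 𝒜 then 1 else 0 with hfdef
  set g : Finset (Fin n) → ℝ := fun s => if s ∈ ℬ then 1 else 0 with hgdef
  have hf0 : 0 ≤ f := fun s => by positivity
  have hg0 : 0 ≤ g := fun s => by positivity
  have hfmono : Monotone f := fun s t hst => by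
    by_cases hs : s ∈ 𝒜
    · simp [hfdef, hs, h𝒜 s hs t hst]
    · simp only [hfdef, hs, if_false]; positivity
  have hgmono : Monotone g := fun s t hst => by
    by_cases hs : s ∈ ℬ
    · simp [hgdef, hs, hℬ s hs t hst]
    · simp only [hgdef, hs, if_false]; positivity
  have hμmod : ∀ a b : Finset (Fin n), μ a * μ b ≤ μ (a ⊓ b) * μ (a ⊔ b) := by
    intro a b
    have hcard : (a ⊓ b).card + (a ⊔ b).card = a.card + b.card := by
      rw [Finset.inf_eq_inter, Finset.sup_eq_union]
      exact Finset.card_inter_add_card_union a b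
    have hle : ∀ s : Finset (Fin n), s.card ≤ n := fun s => by
      simpa using Finset.card_le_card (Finset.subset_univ s)
    have h1 := hle a; have h2' := hle b; have h3 := hle (a ⊓ b); have h4 := hle (a ⊔ b)
    have h2 : (n - (a ⊓ b).card) + (n - (a ⊔ b).card) = (n - a.card) + (n - b.card) := by
      omega
    have : μ a * μ b = μ (a ⊓ b) * μ (a ⊔ b) := by
      simp only [hμdef]
      rw [mul_mul_mul_comm, ← pow_add, ← pow_add, mul_mul_mul_comm, ← pow_add, ← pow_add,
        hcard, h2]
    exact this.le
  have key := fkg f g μ hμ0 hf0 hg0 hfmono hgmono hμmod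
  have hsum : ∑ a : Finset (Fin n), μ a = 1 := by
    have := Finset.prod_add (fun _ : Fin n => p) (fun _ : Fin n => 1 - p) Finset.univ
    simp only [Finset.prod_const] at this
    have h1 : (1:ℝ) = ∑ t ∈ (Finset.univ : Finset (Fin n)).powerset,
        p ^ t.card * (1 - p) ^ (((Finset.univ : Finset (Fin n)) \ t).card) := by
      simpa using this
    rw [Finset.powerset_univ] at h1
    rw [h1]
    refine Finset.sum_congr rfl fun s _ => ?_
    rw [Finset.card_sdiff_of_subset (Finset.subset_univ s), Finset.card_univ, Fintype.card_fin]
  have hind : ∀ (𝒞 : Finset (Finset (Fin n))),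
      famProb n p 𝒞 = ∑ a : Finset (Fin n), μ a * (if a ∈ 𝒞 then (1:ℝ) else 0) := by
    intro 𝒞
    rw [famProb]
    simp only [mul_ite, mul_one, mul_zero, Finset.sum_ite_mem, Finset.univ_inter]
    rfl
  have hfg : ∀ a : Finset (Fin n), f a * g a = if a ∈ 𝒜 ∩ ℬ then (1:ℝ) else 0 := by
    intro a
    by_cases ha : a ∈ 𝒜 <;> by_cases hb : a ∈ ℬ <;>
      simp [hfdef, hgdef, ha, hb, Finset.mem_inter]
  calc famProb n p 𝒜 * famProb n p ℬ
      = (∑ a : Finset (Fin n), μ a * f a) * ∑ a : Finset (Fin n), μ a * g a := by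
        rw [hind 𝒜, hind ℬ]
    _ ≤ (∑ a : Finset (Fin n), μ a) * ∑ a : Finset (Fin n), μ a * (f a * g a) := key
    _ = famProb n p (𝒜 ∩ ℬ) := by
        rw [hsum, one_mul, hind (𝒜 ∩ ℬ)]
        exact Finset.sum_congr rfl fun a _ => by rw [hfg]
end

section
/- Let c = 50 and let k be sufficiently large. If t ≥ (1/50)·exp((c−2)²k/(6c)), then there exists p ∈ (0, 1/2) satisfying simultaneously p · P(Bin((c−5)k, p) ≥ 5k) = 5k/t and P(Bin(ck, p) ≥ (c−1)k) ≤ 1/t³. -/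
/-- `P(Bin(n,p) ≥ m)`, the upper tail of the binomial distribution. -/
noncomputable def binomTail (n m : ℕ) (p : ℝ) : ℝ :=
  ∑ i ∈ Finset.Icc m n, (n.choose i : ℝ) * p ^ i * (1 - p) ^ (n - i)

lemma fac9 : ∀ m : ℕ, 9^m * (m.factorial * (8*m).factorial) ≤ (9*m).factorial := by
  intro m
  induction m with
  | zero => simp
  | succ m ih =>
    have e8 : (8*(m+1)).factorial =
        ((8*m+1)*(8*m+2)*(8*m+3)*(8*m+4)*(8*m+5)*(8*m+6)*(8*m+7)*(8*m+8)) * (8*m).factorial := by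
      rw [show 8*(m+1) = 8*m+1+1+1+1+1+1+1+1 from by ring]
      simp only [Nat.factorial_succ]; ring
    have e9 : (9*(m+1)).factorial =
        ((9*m+1)*(9*m+2)*(9*m+3)*(9*m+4)*(9*m+5)*(9*m+6)*(9*m+7)*(9*m+8)*(9*m+9)) * (9*m).factorial := by
      rw [show 9*(m+1) = 9*m+1+1+1+1+1+1+1+1+1 from by ring]
      simp only [Nat.factorial_succ]; ring
    calc 9^(m+1) * ((m+1).factorial * (8*(m+1)).factorial)
        = ((9*m+9) * ((8*m+1)*(8*m+2)*(8*m+3)*(8*m+4)*(8*m+5)*(8*m+6)*(8*m+7)*(8*m+8)))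
            * (9^m * (m.factorial * (8*m).factorial)) := by
          rw [e8, Nat.factorial_succ]; ring
      _ ≤ ((9*m+9) * ((9*m+1)*(9*m+2)*(9*m+3)*(9*m+4)*(9*m+5)*(9*m+6)*(9*m+7)*(9*m+8)))
            * (9^m * (m.factorial * (8*m).factorial)) := by gcongr <;> omega
      _ ≤ ((9*m+9) * ((9*m+1)*(9*m+2)*(9*m+3)*(9*m+4)*(9*m+5)*(9*m+6)*(9*m+7)*(9*m+8)))
            * (9*m).factorial := by gcongr
      _ = (9*(m+1)).factorial := by rw [e9]; ring

lemma choose9 (m : ℕ) : (9:ℕ)^m ≤ (9*m).choose m := by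
  have h := Nat.choose_mul_factorial_mul_factorial (show m ≤ 9*m by omega)
  rw [show 9*m - m = 8*m from by omega] at h
  have h2 := fac9 m
  have hpos : 0 < m.factorial * (8*m).factorial :=
    Nat.mul_pos m.factorial_pos (8*m).factorial_pos
  refine Nat.le_of_mul_le_mul_right ?_ hpos
  calc 9^m * (m.factorial * (8*m).factorial) ≤ (9*m).factorial := h2
    _ = (9*m).choose m * m.factorial * (8*m).factorial := h.symm
    _ = (9*m).choose m * (m.factorial * (8*m).factorial) := by ring

lemma natA : ∀ k : ℕ, 26 ≤ k → 2250 * k ≤ 2^k := by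
  intro k hk
  induction k, hk using Nat.le_induction with
  | base => norm_num
  | succ k hk ih =>
    have : 2250 * (k+1) ≤ 2 * (2250 * k) := by omega
    calc 2250 * (k+1) ≤ 2 * (2250*k) := this
      _ ≤ 2 * 2^k := by omega
      _ = 2^(k+1) := by ring

set_option maxRecDepth 100000 in
lemma natB : ∀ k : ℕ, 26 ≤ k → (5*k)^9 * 9^9 * 9^(311*k) ≤ 2^(1030*k) := by
  intro k hk
  induction k, hk using Nat.le_induction with
  | base => exact Nat.le_of_ble_eq_true rfl
  | succ k hk ih =>
    have h1 : (5*(k+1))^9 ≤ 2^9 * (5*k)^9 := by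
      calc (5*(k+1))^9 ≤ (2*(5*k))^9 := Nat.pow_le_pow_left (by omega) 9
        _ = 2^9 * (5*k)^9 := by rw [mul_pow]
    have h2 : (9:ℕ)^311 ≤ 2^1021 := Nat.le_of_ble_eq_true rfl
    calc (5*(k+1))^9 * 9^9 * 9^(311*(k+1))
        = ((5*(k+1))^9) * 9^311 * (9^9 * 9^(311*k)) := by
          rw [show 311*(k+1) = 311*k + 311 from by ring, pow_add]; ring
      _ ≤ (2^9 * (5*k)^9) * 2^1021 * (9^9 * 9^(311*k)) := by gcongr
      _ = 2^1030 * ((5*k)^9 * 9^9 * 9^(311*k)) := by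
          rw [show (2:ℕ)^1030 = 2^9 * 2^1021 from by rw [← pow_add]]; ring
      _ ≤ 2^1030 * 2^(1030*k) := by gcongr
      _ = 2^(1030*(k+1)) := by rw [← pow_add]; ring_nf


lemma term_le_binomTail (n m : ℕ) (p : ℝ) (h0 : 0 ≤ p) (h1 : p ≤ 1) (hmn : m ≤ n) :
    (n.choose m : ℝ) * p ^ m * (1 - p) ^ (n - m) ≤ binomTail n m p := by
  apply Finset.single_le_sum (f := fun i => (n.choose i : ℝ) * p ^ i * (1 - p) ^ (n - i))
  · intro i _
    have : (0:ℝ) ≤ 1 - p := by linarith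
    positivity
  · exact Finset.mem_Icc.mpr ⟨le_refl m, hmn⟩

lemma binomTail_le_pow (n m : ℕ) (p : ℝ) (h0 : 0 ≤ p) (h1 : p ≤ 1) :
    binomTail n m p ≤ 2 ^ n * p ^ m := by
  have h1p : (0:ℝ) ≤ 1 - p := by linarith
  calc binomTail n m p ≤ ∑ i ∈ Finset.Icc m n, (n.choose i : ℝ) * p ^ m := by
        apply Finset.sum_le_sum
        intro i hi
        obtain ⟨hmi, hin⟩ := Finset.mem_Icc.mp hi
        have hp : p ^ i ≤ p ^ m := pow_le_pow_of_le_one h0 h1 hmi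
        have hq : (1 - p) ^ (n - i) ≤ 1 := pow_le_one₀ h1p (by linarith)
        calc (n.choose i : ℝ) * p ^ i * (1 - p) ^ (n - i)
            ≤ (n.choose i : ℝ) * p ^ m * 1 := by
              apply mul_le_mul _ hq (by positivity) (by positivity)
              exact mul_le_mul_of_nonneg_left hp (by positivity)
          _ = (n.choose i : ℝ) * p ^ m := mul_one _
    _ = (∑ i ∈ Finset.Icc m n, (n.choose i : ℝ)) * p ^ m := by rw [Finset.sum_mul]
    _ ≤ 2 ^ n * p ^ m := by
        apply mul_le_mul_of_nonneg_right _ (by positivity)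
        calc (∑ i ∈ Finset.Icc m n, (n.choose i : ℝ))
            ≤ ∑ i ∈ Finset.range (n+1), (n.choose i : ℝ) := by
              apply Finset.sum_le_sum_of_subset_of_nonneg
              · intro i hi
                simp only [Finset.mem_Icc, Finset.mem_range] at *
                omega
              · intro i _ _; positivity
          _ = 2 ^ n := by
              rw [← Nat.cast_sum]
              rw [Nat.sum_range_choose]
              push_cast; ring

lemma binomTail_continuous (n m : ℕ) :
    Continuous (fun p : ℝ => p * binomTail n m p) := by
  unfold binomTail
  fun_prop

theorem stmt18 :
    ∃ k₀ : ℕ, ∀ k : ℕ, k₀ ≤ k → ∀ t : ℕ,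
      (1 / 50 : ℝ) * Real.exp (48 ^ 2 * (k : ℝ) / 300) ≤ (t : ℝ) →
      ∃ p ∈ Set.Ioo (0 : ℝ) (1 / 2),
        p * binomTail (45 * k) (5 * k) p = 5 * (k : ℝ) / (t : ℝ) ∧
        binomTail (50 * k) (49 * k) p ≤ 1 / (t : ℝ) ^ 3 := by
  refine ⟨26, fun k hk t ht => ?_⟩
  have hk0 : (0:ℝ) < k := by exact_mod_cast Nat.lt_of_lt_of_le (by norm_num) hk
  have hexp0 : 0 < Real.exp (48 ^ 2 * (k : ℝ) / 300) := Real.exp_pos _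
  have ht0 : (0:ℝ) < t := by nlinarith
  have ht1 : (1:ℝ) ≤ t := by
    have : t ≠ 0 := by
      intro h; rw [h] at ht0; simp at ht0
    exact_mod_cast Nat.one_le_iff_ne_zero.mpr this
  have hy0 : 0 < 5 * (k:ℝ) / t := div_pos (by linarith) ht0
  -- cast of choose9
  have h9c : (9:ℝ)^(5*k) ≤ ((45*k).choose (5*k) : ℝ) := by
    have := choose9 (5*k)
    rw [show 9*(5*k) = 45*k from by ring] at this
    exact_mod_cast this
  -- exp lower bound
  have hE : (2:ℝ)^k * (9/8)^(40*k) ≤ Real.exp (48 ^ 2 * (k : ℝ) / 300) := by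
    have e1 : (2:ℝ)^k * (9/8)^(40*k) ≤ (2.7182818283:ℝ)^(7*k) := by
      calc (2:ℝ)^k * (9/8)^(40*k) = (2 * (9/8)^40)^k := by
            rw [mul_pow, ← pow_mul]
        _ ≤ ((2.7182818283:ℝ)^7)^k := by
            apply pow_le_pow_left₀ (by positivity) _ k
            norm_num
        _ = (2.7182818283:ℝ)^(7*k) := by rw [← pow_mul]
    have e2 : (2.7182818283:ℝ)^(7*k) ≤ Real.exp 1 ^ (7*k) :=
      pow_le_pow_left₀ (by norm_num) (le_of_lt Real.exp_one_gt_d9) _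
    have e3 : Real.exp 1 ^ (7*k) = Real.exp (7*k : ℕ) := Real.exp_one_pow _
    have e4 : Real.exp ((7*k : ℕ) : ℝ) ≤ Real.exp (48 ^ 2 * (k : ℝ) / 300) := by
      apply Real.exp_le_exp.mpr
      push_cast
      nlinarith
    calc (2:ℝ)^k * (9/8)^(40*k) ≤ (2.7182818283:ℝ)^(7*k) := e1
      _ ≤ Real.exp 1 ^ (7*k) := e2
      _ ≤ Real.exp (48 ^ 2 * (k : ℝ) / 300) := by rw [e3]; exact e4
  have hone : (8/9:ℝ)^(40*k) * (9/8)^(40*k) = 1 := by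
    rw [← mul_pow]; norm_num
  -- key numeric bound for IVT
  have hA' : 5 * (k:ℝ) / t ≤ (1/9) * (8/9)^(40*k) := by
    rw [div_le_iff₀ ht0]
    have hnatA : (2250:ℝ) * k ≤ 2^k := by exact_mod_cast natA k hk
    have hc1 : (2:ℝ)^k / 450 ≤ (1/9) * (8/9)^(40*k) * (Real.exp (48 ^ 2 * (k : ℝ) / 300) / 50) := by
      calc (2:ℝ)^k / 450
          = ((8/9:ℝ)^(40*k) * (9/8)^(40*k)) * ((2:ℝ)^k / 450) := by rw [hone]; ring
        _ = (1/9) * (8/9)^(40*k) * ((2^k * (9/8)^(40*k)) / 50) := by ring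
        _ ≤ (1/9) * (8/9)^(40*k) * (Real.exp (48 ^ 2 * (k : ℝ) / 300) / 50) := by
            apply mul_le_mul_of_nonneg_left _ (by positivity)
            linarith
    have hc2 : Real.exp (48 ^ 2 * (k : ℝ) / 300) / 50 ≤ t := by linarith
    calc 5 * (k:ℝ) = 2250 * k / 450 := by ring
      _ ≤ (2:ℝ)^k / 450 := by linarith
      _ ≤ (1/9) * (8/9)^(40*k) * (Real.exp (48 ^ 2 * (k : ℝ) / 300) / 50) := hc1
      _ ≤ (1/9) * (8/9)^(40*k) * t := mul_le_mul_of_nonneg_left hc2 (by positivity)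
  -- lower bound on g (1/9)
  have hterm19 := term_le_binomTail (45*k) (5*k) (1/9) (by norm_num) (by norm_num) (by omega)
  rw [show 45*k - 5*k = 40*k from by omega, show (1:ℝ) - 1/9 = 8/9 from by norm_num] at hterm19
  have hA : 5 * (k:ℝ) / t ≤ (1/9) * binomTail (45*k) (5*k) (1/9) := by
    have hlow : (1/9:ℝ) * (8/9)^(40*k) ≤ (1/9) * binomTail (45*k) (5*k) (1/9) := by
      apply mul_le_mul_of_nonneg_left _ (by norm_num)
      calc (8/9:ℝ)^(40*k) = 9^(5*k) * (1/9:ℝ)^(5*k) * (8/9)^(40*k) := by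
            rw [← mul_pow]; norm_num
        _ ≤ ((45*k).choose (5*k) : ℝ) * (1/9:ℝ)^(5*k) * (8/9)^(40*k) := by
            apply mul_le_mul_of_nonneg_right _ (by positivity)
            exact mul_le_mul_of_nonneg_right h9c (by positivity)
        _ ≤ binomTail (45*k) (5*k) (1/9) := hterm19
    linarith
  -- IVT
  obtain ⟨p, hpI, hpeq⟩ :=
    intermediate_value_Icc (by norm_num : (0:ℝ) ≤ 1/9)
      (binomTail_continuous (45*k) (5*k)).continuousOn
      (by
        constructor
        · simpa using le_of_lt hy0
        · simpa using hA)
  obtain ⟨hp0, hp9⟩ := hpI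
  have hppos : 0 < p := by
    rcases eq_or_lt_of_le hp0 with h | h
    · exfalso
      rw [← h] at hpeq
      simp at hpeq
      linarith
    · exact h
  have hp1 : p ≤ 1 := by linarith [hp9]
  refine ⟨p, ⟨hppos, by linarith [hp9]⟩, hpeq, ?_⟩
  -- second tail bound
  have h1p : (8/9:ℝ) ≤ 1 - p := by linarith
  have hterm := term_le_binomTail (45*k) (5*k) p (le_of_lt hppos) hp1 (by omega)
  rw [show 45*k - 5*k = 40*k from by omega] at hterm
  have hterm2 : (9:ℝ)^(5*k) * p^(5*k) * (8/9)^(40*k) ≤ binomTail (45*k) (5*k) p := by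
    refine le_trans ?_ hterm
    have e1 : (9:ℝ)^(5*k) * p^(5*k) ≤ ((45*k).choose (5*k) : ℝ) * p^(5*k) :=
      mul_le_mul_of_nonneg_right h9c (by positivity)
    have e2 : (8/9:ℝ)^(40*k) ≤ (1-p)^(40*k) :=
      pow_le_pow_left₀ (by norm_num) h1p _
    exact mul_le_mul e1 e2 (by positivity) (by positivity)
  set D : ℝ := 9^(5*k) * (8/9)^(40*k) with hDdef
  have hD : 0 < D := by positivity
  have hX : p^(5*k+1) * D ≤ 5 * (k:ℝ) / t := by
    calc p^(5*k+1) * D = p * (9^(5*k) * p^(5*k) * (8/9)^(40*k)) := by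
          rw [pow_succ]; ring
      _ ≤ p * binomTail (45*k) (5*k) p :=
          mul_le_mul_of_nonneg_left hterm2 (le_of_lt hppos)
      _ = 5 * (k:ℝ) / t := hpeq
  have hXB : p^(5*k+1) ≤ (5 * (k:ℝ) / t) / D := (le_div_iff₀ hD).mpr hX
  -- exponents
  obtain ⟨j, hj⟩ : ∃ j, 4*k = j + 9 := ⟨4*k - 9, by omega⟩
  have hp49 : p^(49*k) = (p^(5*k+1))^9 * p^j := by
    rw [← pow_mul, ← pow_add]; congr 1; omega
  have htail2 : binomTail (50*k) (49*k) p ≤ 2^(50*k) * p^(49*k) :=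
    binomTail_le_pow (50*k) (49*k) p (le_of_lt hppos) hp1
  have hB0 : 0 ≤ (5 * (k:ℝ) / t) / D := by positivity
  have hq : (p^(5*k+1))^9 * p^j ≤ ((5 * (k:ℝ) / t) / D)^9 * (1/9:ℝ)^j := by
    apply mul_le_mul
    · exact pow_le_pow_left₀ (by positivity) hXB 9
    · exact pow_le_pow_left₀ (le_of_lt hppos) hp9 j
    · positivity
    · positivity
  -- main numeric bound
  have hkey : (5*(k:ℝ))^9 * 9^9 * 9^(311*k) ≤ 2^(1030*k) := by
    have := natB k hk
    exact_mod_cast this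
  have hMain : 2^(50*k) * (5*(k:ℝ))^9 * (1/9:ℝ)^j ≤ D^9 := by
    have hD9 : D^9 = 9^(45*k) * (8/9:ℝ)^(360*k) := by
      rw [hDdef, mul_pow, ← pow_mul, ← pow_mul,
        show 5*k*9 = 45*k from by ring, show 40*k*9 = 360*k from by ring]
    have h89 : (8/9:ℝ)^(360*k) = 2^(1080*k)/9^(360*k) := by
      rw [div_pow]
      congr 1
      rw [show (8:ℝ) = 2^3 from by norm_num, ← pow_mul, show 3*(360*k) = 1080*k from by ring]
    have hfrac : (2:ℝ)^(50*k) * (5*(k:ℝ))^9 * (1/9:ℝ)^j = (2^(50*k) * (5*k)^9)/9^j := by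
      rw [div_pow, one_pow]; ring
    rw [hD9, h89, hfrac, ← mul_div_assoc]
    rw [div_le_div_iff₀ (by positivity) (by positivity)]
    have d1 : (9:ℝ)^(360*k) = 9^9 * 9^(311*k) * (9^(45*k) * 9^j) := by
      rw [← pow_add, ← pow_add, ← pow_add]; congr 1; omega
    have d2 : (2:ℝ)^(1080*k) = 2^(1030*k) * 2^(50*k) := by
      rw [← pow_add]; congr 1; ring
    calc (2:ℝ)^(50*k) * (5*(k:ℝ))^9 * 9^(360*k)
        = ((5*(k:ℝ))^9 * 9^9 * 9^(311*k)) * (2^(50*k) * 9^(45*k) * 9^j) := by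
          rw [d1]; ring
      _ ≤ 2^(1030*k) * (2^(50*k) * 9^(45*k) * 9^j) := by
          apply mul_le_mul_of_nonneg_right hkey (by positivity)
      _ = 9^(45*k) * 2^(1080*k) * 9^j := by
          rw [d2]; ring
  -- final chain
  have hfinal : (2:ℝ)^(50*k) * (((5 * (k:ℝ) / t) / D)^9 * (1/9:ℝ)^j) ≤ 1/(t:ℝ)^3 := by
    have hBpow : ((5 * (k:ℝ) / t) / D)^9 = (5*(k:ℝ))^9/((t:ℝ)^9 * D^9) := by
      rw [div_pow, div_pow]; ring
    have heq : (2:ℝ)^(50*k) * (((5 * (k:ℝ) / t) / D)^9 * (1/9:ℝ)^j)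
        = (2^(50*k) * (5*(k:ℝ))^9 * (1/9:ℝ)^j)/((t:ℝ)^9 * D^9) := by
      rw [hBpow]; ring
    rw [heq, div_le_div_iff₀ (by positivity) (by positivity)]
    calc 2^(50*k) * (5*(k:ℝ))^9 * (1/9:ℝ)^j * (t:ℝ)^3
        ≤ D^9 * (t:ℝ)^3 := mul_le_mul_of_nonneg_right hMain (by positivity)
      _ ≤ D^9 * (t:ℝ)^9 := by
          apply mul_le_mul_of_nonneg_left _ (by positivity)
          exact pow_le_pow_right₀ ht1 (by norm_num)
      _ = 1 * ((t:ℝ)^9 * D^9) := by ring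
  calc binomTail (50*k) (49*k) p ≤ 2^(50*k) * p^(49*k) := htail2
    _ = 2^(50*k) * ((p^(5*k+1))^9 * p^j) := by rw [hp49]
    _ ≤ 2^(50*k) * (((5 * (k:ℝ) / t) / D)^9 * (1/9:ℝ)^j) :=
        mul_le_mul_of_nonneg_left hq (by positivity)
    _ ≤ 1/(t:ℝ)^3 := hfinal
end
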